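/- arXiv:2005.09017 — 3 statements merged into one kernel-verified Lean document; each statement's English description precedes it below -/
import Mathlib

section
/- Let Φ be the p(p-1)/2 × p(p-1)/2 symmetric matrix indexed by pairs (a,b), a<b, with Φ_{(ab),(ab)} = s_{aa}+s_{bb}, Φ_{(ab),(cb)} = s_{ac} for a≠c, Φ_{(ab),(ad)} = s_{bd} for b≠d, and Φ_{(ab),(cd)} = 0 when {a,b}∩{c,d} = ∅, where S = (s_{ij}) is a symmetric positive semidefinite p×p matrix. Then eig_min(S) ≤ eig_min(Φ) ≤ eig_max(Φ) ≤ 2·eig_max(S). -/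
open Matrix BigOperators

section PhiAux

variable {p : ℕ}

/-- symmetric elementary matrix for a pair -/
noncomputable def phiE (ab : {x : Fin p × Fin p // x.1 < x.2}) : Matrix (Fin p) (Fin p) ℝ :=
  Matrix.single ab.1.1 ab.1.2 1 + Matrix.single ab.1.2 ab.1.1 1

lemma phiE_symm (ab : {x : Fin p × Fin p // x.1 < x.2}) : (phiE ab)ᴴ = phiE ab := by
  ext i j
  simp [phiE, Matrix.single, Matrix.conjTranspose_apply, Matrix.add_apply, and_comm]
  rw [add_comm]

lemma phiE_symmT (ab : {x : Fin p × Fin p // x.1 < x.2}) : (phiE ab)ᵀ = phiE ab := by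
  have := phiE_symm ab; rwa [Matrix.conjTranspose_eq_transpose_of_trivial] at this

lemma trace_psd_nonneg {n : Type*} [Fintype n] [DecidableEq n] {M : Matrix n n ℝ}
    (h : M.PosSemidef) : 0 ≤ M.trace := by
  refine Finset.sum_nonneg fun i _ => ?_
  exact h.diag_nonneg

lemma trace_stdBasis_mul {n : Type*} [Fintype n] [DecidableEq n]
    (P : Matrix n n ℝ) (i j k l : n) :
    Matrix.trace (Matrix.single i j (1:ℝ) * P * Matrix.single k l 1) =
      if i = l then P j k else 0 := by
  simp [Matrix.trace, Matrix.diag, Matrix.mul_apply, Matrix.single, ite_and,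
    Finset.sum_ite_eq, Finset.sum_ite_eq', mul_ite, ite_mul, mul_zero, zero_mul]

lemma trace_phiE_mul (P : Matrix (Fin p) (Fin p) ℝ)
    (ab cd : {x : Fin p × Fin p // x.1 < x.2}) :
    Matrix.trace (phiE ab * P * phiE cd) =
      (if ab.1.1 = cd.1.2 then P ab.1.2 cd.1.1 else 0) +
      (if ab.1.1 = cd.1.1 then P ab.1.2 cd.1.2 else 0) +
      (if ab.1.2 = cd.1.2 then P ab.1.1 cd.1.1 else 0) +
      (if ab.1.2 = cd.1.1 then P ab.1.1 cd.1.2 else 0) := by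
  simp only [phiE, add_mul, mul_add, Matrix.trace_add, trace_stdBasis_mul]
  ring

/-- the symmetric matrix built from a pair-indexed vector -/
noncomputable def phiOm (x : {x : Fin p × Fin p // x.1 < x.2} → ℝ) :
    Matrix (Fin p) (Fin p) ℝ :=
  ∑ ab, x ab • phiE ab

lemma phiOm_symm (x : {x : Fin p × Fin p // x.1 < x.2} → ℝ) : (phiOm x)ᴴ = phiOm x := by
  simp [phiOm, phiE_symmT, Matrix.transpose_sum, Matrix.transpose_smul]

lemma trace_phiOm (x : {x : Fin p × Fin p // x.1 < x.2} → ℝ)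
    (P : Matrix (Fin p) (Fin p) ℝ) :
    Matrix.trace (phiOm x * P * (phiOm x)ᴴ) =
      ∑ ab, ∑ cd, x ab * x cd * Matrix.trace (phiE ab * P * phiE cd) := by
  rw [phiOm_symm]
  simp only [phiOm, Finset.sum_mul, Finset.mul_sum, smul_mul_assoc, mul_smul_comm,
    Matrix.trace_sum, Matrix.trace_smul, smul_eq_mul, smul_smul]
  rw [Finset.sum_comm]
  refine Finset.sum_congr rfl fun ab _ => Finset.sum_congr rfl fun cd _ => ?_
  rw [show phiE ab * P * phiE cd = phiE ab * (P * phiE cd) from mul_assoc _ _ _]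
  ring

lemma sub_smul_one_psd {n : Type*} [Fintype n] [DecidableEq n]
    (M : Matrix n n ℝ) (hM : M.IsHermitian) (c : ℝ)
    (h : ∀ i, c ≤ hM.eigenvalues i) : (M - c • 1).PosSemidef := by
  have hst := hM.spectral_theorem
  set U : Matrix n n ℝ := (hM.eigenvectorUnitary : Matrix n n ℝ)
  have hU : U * star U = 1 := (Matrix.mem_unitaryGroup_iff).mp hM.eigenvectorUnitary.2
  have h2 : U * ((c : ℝ) • (1 : Matrix n n ℝ)) * star U = c • 1 := by
    rw [Matrix.mul_smul, mul_one, Matrix.smul_mul, hU]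
  have key : M - c • 1 = U * (Matrix.diagonal (RCLike.ofReal ∘ hM.eigenvalues)
      - c • 1) * star U := by
    rw [mul_sub, sub_mul, h2]; exact congrArg (· - c • 1) (hst.trans (Unitary.conjStarAlgAut_apply _ _))
  rw [key, Matrix.star_eq_conjTranspose]
  have hd : (Matrix.diagonal (RCLike.ofReal ∘ hM.eigenvalues) - c • (1 : Matrix n n ℝ))
      = Matrix.diagonal (fun i => hM.eigenvalues i - c) := by
    rw [Matrix.smul_one_eq_diagonal, ← Matrix.diagonal_sub]
    rfl
  rw [hd]
  exact (Matrix.posSemidef_diagonal_iff.mpr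
    fun i => sub_nonneg.mpr (h i)).mul_mul_conjTranspose_same U

lemma smul_one_sub_psd {n : Type*} [Fintype n] [DecidableEq n]
    (M : Matrix n n ℝ) (hM : M.IsHermitian) (C : ℝ)
    (h : ∀ i, hM.eigenvalues i ≤ C) : (C • 1 - M).PosSemidef := by
  have hst := hM.spectral_theorem
  set U : Matrix n n ℝ := (hM.eigenvectorUnitary : Matrix n n ℝ)
  have hU : U * star U = 1 := (Matrix.mem_unitaryGroup_iff).mp hM.eigenvectorUnitary.2
  have h2 : U * ((C : ℝ) • (1 : Matrix n n ℝ)) * star U = C • 1 := by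
    rw [Matrix.mul_smul, mul_one, Matrix.smul_mul, hU]
  have key : C • 1 - M = U * (C • 1 - Matrix.diagonal (RCLike.ofReal ∘ hM.eigenvalues))
      * star U := by
    rw [mul_sub, sub_mul, h2]; exact congrArg _ (hst.trans (Unitary.conjStarAlgAut_apply _ _))
  rw [key, Matrix.star_eq_conjTranspose]
  have hd : (C • (1 : Matrix n n ℝ) - Matrix.diagonal (RCLike.ofReal ∘ hM.eigenvalues))
      = Matrix.diagonal (fun i => C - hM.eigenvalues i) := by
    rw [Matrix.smul_one_eq_diagonal, ← Matrix.diagonal_sub]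
    rfl
  rw [hd]
  exact (Matrix.posSemidef_diagonal_iff.mpr
    fun i => sub_nonneg.mpr (h i)).mul_mul_conjTranspose_same U

lemma phi_formula_core (S : Matrix (Fin p) (Fin p) ℝ) (a b c d : Fin p)
    (hab : a < b) (hcd : c < d) :
    (if a = c ∧ b = d then S a a + S b b
     else if a = c then S b d
     else if b = d then S a c
     else if a = d then S b c
     else if b = c then S a d
     else 0) =
    (if a = d then S b c else 0) + (if a = c then S b d else 0) +
    (if b = d then S a c else 0) + (if b = c then S a d else 0) := by
  by_cases h1 : a = c <;> by_cases h2 : b = d <;> by_cases h3 : a = d <;>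
    by_cases h4 : b = c <;> simp_all
  all_goals first
    | omega
    | exact absurd (hab.trans hcd) (lt_irrefl _)
    | ring

lemma phi_formula (S : Matrix (Fin p) (Fin p) ℝ)
    (ab cd : {x : Fin p × Fin p // x.1 < x.2}) :
    (if ab = cd then S ab.1.1 ab.1.1 + S ab.1.2 ab.1.2
        else if ab.1.1 = cd.1.1 then S ab.1.2 cd.1.2
        else if ab.1.2 = cd.1.2 then S ab.1.1 cd.1.1
        else if ab.1.1 = cd.1.2 then S ab.1.2 cd.1.1
        else if ab.1.2 = cd.1.1 then S ab.1.1 cd.1.2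
        else 0) = Matrix.trace (phiE ab * S * phiE cd) := by
  rw [trace_phiE_mul]
  obtain ⟨⟨a, b⟩, hab⟩ := ab
  obtain ⟨⟨c', d'⟩, hcd⟩ := cd
  simp only [Subtype.mk.injEq, Prod.mk.injEq]
  exact phi_formula_core S a b c' d' hab hcd

lemma one_formula_core (a b c d : Fin p) (hab : a < b) (hcd : c < d) :
    ((if a = d then (if b = c then (1:ℝ) else 0) else 0) +
     (if a = c then (if b = d then (1:ℝ) else 0) else 0) +
     (if b = d then (if a = c then (1:ℝ) else 0) else 0) +
     (if b = c then (if a = d then (1:ℝ) else 0) else 0)) =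
    if a = c ∧ b = d then 2 else 0 := by
  by_cases h1 : a = c <;> by_cases h2 : b = d <;> by_cases h3 : a = d <;>
    by_cases h4 : b = c <;> simp_all
  all_goals first
    | omega
    | exact absurd (hab.trans hcd) (lt_irrefl _)
    | ring

lemma trace_phiE_one (ab cd : {x : Fin p × Fin p // x.1 < x.2}) :
    Matrix.trace (phiE ab * phiE cd) = if ab = cd then (2:ℝ) else 0 := by
  rw [show phiE ab * phiE cd = phiE ab * 1 * phiE cd by rw [mul_one], trace_phiE_mul]
  obtain ⟨⟨a, b⟩, hab⟩ := ab
  obtain ⟨⟨c', d'⟩, hcd⟩ := cd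
  simp only [Matrix.one_apply, Subtype.mk.injEq, Prod.mk.injEq]
  exact one_formula_core a b c' d' hab hcd

end PhiAux

/-- The matrix `Φ` indexed by pairs `(a,b)` with `a < b`, built from a symmetric
positive semidefinite matrix `S` (diagonal entries `s_aa + s_bb`, entry `s` of the two
non-shared indices when the pairs share exactly one index, and `0` for disjoint pairs),
has all its eigenvalues between `eig_min(S)` and `2 * eig_max(S)`. -/
theorem phi_eigenvalue_bounds (p : ℕ) (hp : 0 < p)
    (S : Matrix (Fin p) (Fin p) ℝ) (hS : S.PosSemidef)
    (Φ : Matrix {x : Fin p × Fin p // x.1 < x.2} {x : Fin p × Fin p // x.1 < x.2} ℝ)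
    (hΦdef : ∀ ab cd : {x : Fin p × Fin p // x.1 < x.2},
      Φ ab cd =
        if ab = cd then S ab.1.1 ab.1.1 + S ab.1.2 ab.1.2
        else if ab.1.1 = cd.1.1 then S ab.1.2 cd.1.2
        else if ab.1.2 = cd.1.2 then S ab.1.1 cd.1.1
        else if ab.1.1 = cd.1.2 then S ab.1.2 cd.1.1
        else if ab.1.2 = cd.1.1 then S ab.1.1 cd.1.2
        else 0)
    (hΦ : Φ.IsHermitian) :
    ∀ i, (⨅ j, hS.isHermitian.eigenvalues j) ≤ hΦ.eigenvalues i ∧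
      hΦ.eigenvalues i ≤ 2 * ⨆ j, hS.isHermitian.eigenvalues j := by
  intro i
  classical
  have hne : Nonempty (Fin p) := ⟨⟨0, hp⟩⟩
  set ev := hS.isHermitian.eigenvalues with hev
  set c := ⨅ j, ev j with hcdef
  set C := ⨆ j, ev j with hCdef
  have hcle : ∀ j, c ≤ ev j := fun j =>
    ciInf_le (Set.Finite.bddBelow (Set.finite_range ev)) j
  have hCge : ∀ j, ev j ≤ C := fun j =>
    le_ciSup (Set.Finite.bddAbove (Set.finite_range ev)) j
  have hc0 : 0 ≤ c := le_ciInf fun j => hS.eigenvalues_nonneg j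
  have hpsd1 : (S - c • 1).PosSemidef := sub_smul_one_psd S hS.isHermitian c hcle
  have hpsd2 : (C • 1 - S).PosSemidef := smul_one_sub_psd S hS.isHermitian C hCge
  set v : {x : Fin p × Fin p // x.1 < x.2} → ℝ := ⇑(hΦ.eigenvectorBasis i) with hv
  have hlam : hΦ.eigenvalues i = v ⬝ᵥ (Φ *ᵥ v) := by
    have h := hΦ.eigenvalues_eq i
    simpa using h
  have hnorm : v ⬝ᵥ v = 1 := by
    have h1 := orthonormal_iff_ite.mp hΦ.eigenvectorBasis.orthonormal i i
    simp only [if_true, PiLp.inner_apply, RCLike.inner_apply, conj_trivial] at h1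
    simpa [dotProduct, mul_comm] using h1
  have hphi_tr : ∀ ab cd, Φ ab cd = Matrix.trace (phiE ab * S * phiE cd) := by
    intro ab cd
    rw [hΦdef]
    exact phi_formula S ab cd
  have hQ : v ⬝ᵥ (Φ *ᵥ v) = Matrix.trace (phiOm v * S * (phiOm v)ᴴ) := by
    rw [trace_phiOm]
    simp only [dotProduct, Matrix.mulVec, Finset.mul_sum]
    refine Finset.sum_congr rfl fun ab _ => Finset.sum_congr rfl fun cd _ => ?_
    rw [hphi_tr]
    ring
  have htrOm : Matrix.trace (phiOm v * 1 * (phiOm v)ᴴ) = 2 := by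
    rw [trace_phiOm]
    have step : ∀ ab : {x : Fin p × Fin p // x.1 < x.2},
        ∑ cd, v ab * v cd * Matrix.trace (phiE ab * 1 * phiE cd) = v ab * v ab * 2 := by
      intro ab
      simp only [mul_one, trace_phiE_one, mul_ite, mul_zero]
      rw [Finset.sum_ite_eq]
      simp only [Finset.mem_univ, if_true]
    rw [Finset.sum_congr rfl fun ab _ => step ab]
    have : ∑ ab, v ab * v ab * 2 = (v ⬝ᵥ v) * 2 := by
      rw [dotProduct, Finset.sum_mul]
    rw [this, hnorm, one_mul]
  have e1 : phiOm v * (S - c • 1) * (phiOm v)ᴴ =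
      phiOm v * S * (phiOm v)ᴴ - c • (phiOm v * 1 * (phiOm v)ᴴ) := by
    rw [mul_sub, sub_mul, Matrix.mul_smul, Matrix.smul_mul]
  have e2 : phiOm v * (C • 1 - S) * (phiOm v)ᴴ =
      C • (phiOm v * 1 * (phiOm v)ᴴ) - phiOm v * S * (phiOm v)ᴴ := by
    rw [mul_sub, sub_mul, Matrix.mul_smul, Matrix.smul_mul]
  have l1 : 0 ≤ Matrix.trace (phiOm v * (S - c • 1) * (phiOm v)ᴴ) :=
    trace_psd_nonneg (hpsd1.mul_mul_conjTranspose_same (phiOm v))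
  have l2 : 0 ≤ Matrix.trace (phiOm v * (C • 1 - S) * (phiOm v)ᴴ) :=
    trace_psd_nonneg (hpsd2.mul_mul_conjTranspose_same (phiOm v))
  rw [e1, Matrix.trace_sub, Matrix.trace_smul, htrOm, smul_eq_mul] at l1
  rw [e2, Matrix.trace_sub, Matrix.trace_smul, htrOm, smul_eq_mul] at l2
  have hlamQ : hΦ.eigenvalues i = Matrix.trace (phiOm v * S * (phiOm v)ᴴ) := by
    rw [hlam, hQ]
  constructor
  · rw [hlamQ]; linarith
  · rw [hlamQ]; linarith
end

section
/- Let K be a p×p symmetric positive definite matrix belonging to M_G (i.e., obeying the sparsity pattern of a graph G). Then K is the unique minimizer over Ω ∈ M_G of the function (n/2)·tr(Ω² K⁻¹) - n·tr(Ω). -/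
open Matrix

/-- If `K` is symmetric positive definite and belongs to `M_G`, then `K` is the
unique minimizer over `Ω ∈ M_G` of `(n/2) tr(Ω² K⁻¹) - n tr(Ω)`. -/
theorem refitted_objective_unique_minimizer (p : ℕ) (E : Fin p → Fin p → Prop)
    (hEsymm : ∀ i j, E i j → E j i) (n : ℝ) (hn : 0 < n)
    (K : Matrix (Fin p) (Fin p) ℝ) (hK : K.PosDef)
    (hKdiag : ∀ i, 0 < K i i) (hKG : ∀ i j, i ≠ j → ¬E i j → K i j = 0)
    (Ω : Matrix (Fin p) (Fin p) ℝ) (hΩ : Ω.IsSymm)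
    (hΩdiag : ∀ i, 0 < Ω i i) (hΩG : ∀ i j, i ≠ j → ¬E i j → Ω i j = 0)
    (hne : Ω ≠ K) :
    n / 2 * (K * K * K⁻¹).trace - n * K.trace <
      n / 2 * (Ω * Ω * K⁻¹).trace - n * Ω.trace := by
  set D : Matrix (Fin p) (Fin p) ℝ := Ω - K with hD
  have hKinv : K * K⁻¹ = 1 := Matrix.mul_nonsing_inv K (isUnit_iff_ne_zero.mpr hK.det_pos.ne')
  have hInvPD : K⁻¹.PosDef := hK.inv
  have hKsymm : K.IsSymm := by
    rw [Matrix.IsSymm, ← Matrix.conjTranspose_eq_transpose_of_trivial, hK.isHermitian.eq]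
  have hDsymm : D.IsSymm := by
    rw [Matrix.IsSymm, hD, Matrix.transpose_sub, hΩ.eq, hKsymm.eq]
  have hDne : D ≠ 0 := sub_ne_zero_of_ne hne
  -- h1 : trace of K*K*K⁻¹
  have h1 : (K * K * K⁻¹).trace = K.trace := by
    rw [mul_assoc, hKinv, mul_one]
  -- expand D * K⁻¹ * D
  have hexp : D * K⁻¹ * D = Ω * K⁻¹ * Ω - Ω - Ω + K := by
    have hΩK : Ω * K⁻¹ * K = Ω := by rw [mul_assoc, Matrix.nonsing_inv_mul K (isUnit_iff_ne_zero.mpr hK.det_pos.ne'), mul_one]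
    have hKΩ : K * K⁻¹ * Ω = Ω := by rw [hKinv, one_mul]
    have hKK : K * K⁻¹ * K = K := by rw [hKinv, one_mul]
    rw [hD]
    noncomm_ring [hΩK, hKΩ, hKK]
  have h2 : (D * K⁻¹ * D).trace = (Ω * Ω * K⁻¹).trace - 2 * Ω.trace + K.trace := by
    rw [hexp]
    have : (Ω * K⁻¹ * Ω).trace = (Ω * Ω * K⁻¹).trace := by
      rw [Matrix.trace_mul_comm (Ω * K⁻¹) Ω, ← mul_assoc]
    simp only [Matrix.trace_add, Matrix.trace_sub, this]
    ring
  -- positivity of trace(D K⁻¹ D)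
  have hdiag : ∀ i, (D * K⁻¹ * D) i i = (fun j => D j i) ⬝ᵥ (K⁻¹ *ᵥ fun j => D j i) := by
    intro i
    simp only [Matrix.mul_apply, Matrix.mulVec, dotProduct, Finset.sum_mul, Finset.mul_sum]
    rw [Finset.sum_comm]
    refine Finset.sum_congr rfl fun k _ => Finset.sum_congr rfl fun j _ => ?_
    rw [hDsymm.apply k i]; ring
  have hnn : ∀ i, 0 ≤ (D * K⁻¹ * D) i i := by
    intro i
    rw [hdiag i]
    by_cases hx : (fun j => D j i) = 0
    · rw [hx]; simp
    · have := hInvPD.dotProduct_mulVec_pos hx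
      simpa using this.le
  obtain ⟨a, b, hab⟩ : ∃ a b, D a b ≠ 0 := by
    by_contra h
    push_neg at h
    exact hDne (by ext a b; simpa using h a b)
  have hposi : 0 < (D * K⁻¹ * D) b b := by
    rw [hdiag b]
    have hx : (fun j => D j b) ≠ 0 := by
      intro h
      exact hab (congrFun h a)
    have := hInvPD.dotProduct_mulVec_pos hx
    simpa using this
  have h3 : 0 < (D * K⁻¹ * D).trace := by
    rw [Matrix.trace]
    refine Finset.sum_pos' (fun i _ => hnn i) ⟨b, Finset.mem_univ b, hposi⟩
  rw [h1]
  nlinarith [h2, h3]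
end

section
/- If x² | a ~ InverseGamma(1/2, 1/a) and a ~ InverseGamma(1/2, 1/A²), then the marginal distribution of x (taking x > 0) is half-Cauchy with scale A, i.e., x has density p(x) = 2/(πA(1+(x/A)²)) on (0,∞). -/
open Real MeasureTheory

lemma exp_neg_mul_integral_Ioi {c : ℝ} (hc : 0 < c) :
    ∫ y in Set.Ioi (0 : ℝ), Real.exp (-(c * y)) = 1 / c := by
  have := integral_rpow_mul_exp_neg_mul_Ioi (a := 1) (r := c) one_pos hc
  simpa [Real.Gamma_one] using this

lemma inv_sq_exp_integral {c : ℝ} (hc : 0 < c) :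
    ∫ a in Set.Ioi (0 : ℝ), a ^ (-(2 : ℝ)) * Real.exp (-(c * a⁻¹)) = 1 / c := by
  have h := MeasureTheory.integral_comp_rpow_Ioi (fun y => Real.exp (-(c * y)))
      (p := -1) (by norm_num)
  rw [← exp_neg_mul_integral_Ioi hc, ← h]
  refine setIntegral_congr_fun measurableSet_Ioi fun a ha => ?_
  have ha' : (0 : ℝ) < a := ha
  rw [Real.rpow_neg_one, smul_eq_mul]
  norm_num

/-- If `x² | a ~ InverseGamma(1/2, 1/a)` and `a ~ InverseGamma(1/2, 1/A²)`, then
the marginal density of `x > 0` (obtained by integrating the conditional density of `x`,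
namely `2x · (1/√a)/√π · (x²)^{-3/2} e^{-1/(a x²)}`, against the density of `a`) is the
half-Cauchy density `2/(π A (1 + x²/A²))`. -/
theorem inverse_gamma_mixture_half_cauchy (A : ℝ) (hA : 0 < A) (x : ℝ) (hx : 0 < x) :
    ∫ a in Set.Ioi (0 : ℝ),
      (2 * x * ((1 / Real.sqrt a) / Real.sqrt Real.pi * (x ^ 2) ^ (-(3 : ℝ) / 2) *
          Real.exp (-(1 / (a * x ^ 2))))) *
        ((1 / A) / Real.sqrt Real.pi * a ^ (-(3 : ℝ) / 2) * Real.exp (-(1 / (a * A ^ 2)))) =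
      2 / (Real.pi * A * (1 + x ^ 2 / A ^ 2)) := by
  set c : ℝ := 1 / x ^ 2 + 1 / A ^ 2 with hc_def
  have hc : 0 < c := by positivity
  set K : ℝ := 2 * x * (x ^ 2) ^ (-(3 : ℝ) / 2) / (Real.pi * A) with hK_def
  have hmain : (∫ a in Set.Ioi (0 : ℝ),
      (2 * x * ((1 / Real.sqrt a) / Real.sqrt Real.pi * (x ^ 2) ^ (-(3 : ℝ) / 2) *
          Real.exp (-(1 / (a * x ^ 2))))) *
        ((1 / A) / Real.sqrt Real.pi * a ^ (-(3 : ℝ) / 2) * Real.exp (-(1 / (a * A ^ 2)))))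
      = K * (1 / c) := by
    rw [← inv_sq_exp_integral hc, ← MeasureTheory.integral_const_mul]
    refine setIntegral_congr_fun measurableSet_Ioi fun a ha => ?_
    have ha' : (0 : ℝ) < a := ha
    have hsq : Real.sqrt a = a ^ ((1:ℝ)/2) := Real.sqrt_eq_rpow a
    have hpow : (1 / Real.sqrt a) * a ^ (-(3 : ℝ) / 2) = a ^ (-(2 : ℝ)) := by
      rw [hsq, one_div, ← Real.rpow_neg ha'.le, ← Real.rpow_add ha']
      norm_num
    have hexp : Real.exp (-(1 / (a * x ^ 2))) * Real.exp (-(1 / (a * A ^ 2)))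
        = Real.exp (-(c * a⁻¹)) := by
      rw [← Real.exp_add]
      congr 1
      rw [hc_def]
      field_simp
      ring
    have hpi : Real.sqrt Real.pi * Real.sqrt Real.pi = Real.pi :=
      Real.mul_self_sqrt Real.pi_pos.le
    have hsa : Real.sqrt a ≠ 0 := (Real.sqrt_pos.mpr ha').ne'
    have hsp : Real.sqrt Real.pi ≠ 0 := (Real.sqrt_pos.mpr Real.pi_pos).ne'
    rw [hK_def, ← hexp, ← hpow]
    field_simp
    linear_combination hpi.symm
  rw [hmain, hK_def]
  have hx2 : (x ^ 2) ^ (-(3 : ℝ) / 2) = (x ^ 3)⁻¹ := by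
    rw [← Real.rpow_natCast x 2, ← Real.rpow_mul hx.le, ← Real.rpow_natCast x 3,
      ← Real.rpow_neg hx.le]
    norm_num
  rw [hx2, hc_def]
  have hπ := Real.pi_pos
  field_simp
end
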